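/- Let u, v, x, y be points in the plane with u ≠ v, x ≠ y, such that x lies in the side region of {u,v} adjacent to v and y lies in one of the center regions of {u,v}. If v lies in the side region of {x,y} adjacent to y, then u also lies in the side region of {x,y} adjacent to y. -/

import Mathlib

open Real

private lemma core_half (s A2 V2 B2 P Q R S T U D1 D2 : ℝ)
    (hs : s^2 = 3) (hsp : 0 < s)
    (hB2pos : 0 < B2) (hV2pos : 0 < V2) (hA2nn : 0 ≤ A2)
    (e1 : B2*T = (A2+P)*R - Q*S)
    (e2 : B2*U = (A2+P)*S + Q*R)
    (e3 : B2*D1 = (V2+P)*R + Q*S)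
    (e4 : B2*D2 = (V2+P)*S - Q*R)
    (e5 : V2*T = P*D1 - Q*D2)
    (e6 : V2*U = P*D2 + Q*D1)
    (hQ : 0 ≤ Q)
    (hA1 : 0 ≤ s*P - Q) (hA1' : 0 ≤ s*P + Q)
    (hB1 : 0 ≤ s*R - S) (hB1' : 0 ≤ s*R + S)
    (hD : s*D1 < -D2 ∨ s*D1 < D2) :
    0 ≤ s*T - U ∧ 0 ≤ s*T + U := by
  have I1 : s*(B2*(s*T+U)) = (s*A2 + (s*P-Q))*(s*R+S) + 2*Q*(s*R-S) := by
    linear_combination (s^2)*e1 + s*e2 + (-(Q*S))*hs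
  have I2 : s*(B2*(s*D1-D2)) = 2*Q*(s*R+S) + (s*V2 + (s*P-Q))*(s*R-S) := by
    linear_combination (s^2)*e3 - s*e4 + (Q*S)*hs
  have I3 : s*(V2*(s*T-U)) = 2*Q*(-(s*D1+D2)) + (s*P+Q)*(s*D1-D2) := by
    linear_combination (s^2)*e5 - s*e6 + (-(Q*D2))*hs
  have hP' : 0 ≤ s*A2 + (s*P-Q) := by
    have := mul_nonneg hsp.le hA2nn; linarith
  have hP'' : 0 ≤ s*V2 + (s*P-Q) := by
    have := mul_nonneg hsp.le hV2pos.le; linarith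
  have hsB2 : 0 < s*B2 := mul_pos hsp hB2pos
  have hsV2 : 0 < s*V2 := mul_pos hsp hV2pos
  have g1 : 0 ≤ s*T + U := by
    nlinarith [I1, mul_nonneg hP' hB1', mul_nonneg hQ hB1, hsB2]
  have g2' : 0 ≤ s*D1 - D2 := by
    nlinarith [I2, mul_nonneg hQ hB1', mul_nonneg hP'' hB1, hsB2]
  rcases hD with hD | hD
  · have hneg : 0 ≤ -(s*D1+D2) := by linarith
    have g2 : 0 ≤ s*T - U := by
      nlinarith [I3, mul_nonneg hQ hneg, mul_nonneg hA1' g2', hsV2]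
    exact ⟨g2, g1⟩
  · linarith

private lemma core (s a0 a1 v0 v1 w0 w1 : ℝ) (hs : s^2 = 3) (hsp : 0 < s)
    (hB2pos : 0 < (a0+v0)^2+(a1+v1)^2) (hV2pos : 0 < v0^2+v1^2)
    (hA1 : 0 ≤ s*(a0*v0+a1*v1) - (a0*v1-a1*v0))
    (hA2 : 0 ≤ s*(a0*v0+a1*v1) + (a0*v1-a1*v0))
    (hB1 : 0 ≤ s*((a0+v0)*w0+(a1+v1)*w1) - ((a0+v0)*w1-(a1+v1)*w0))
    (hB2' : 0 ≤ s*((a0+v0)*w0+(a1+v1)*w1) + ((a0+v0)*w1-(a1+v1)*w0))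
    (hD : s*(v0*w0+v1*w1) < -(v0*w1-v1*w0) ∨ s*(v0*w0+v1*w1) < (v0*w1-v1*w0)) :
    0 ≤ s*(a0*w0+a1*w1) - (a0*w1-a1*w0) ∧ 0 ≤ s*(a0*w0+a1*w1) + (a0*w1-a1*w0) := by
  rcases le_total 0 (a0*v1-a1*v0) with hQ | hQ
  · exact core_half s (a0^2+a1^2) (v0^2+v1^2) ((a0+v0)^2+(a1+v1)^2)
      (a0*v0+a1*v1) (a0*v1-a1*v0)
      ((a0+v0)*w0+(a1+v1)*w1) ((a0+v0)*w1-(a1+v1)*w0)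
      (a0*w0+a1*w1) (a0*w1-a1*w0) (v0*w0+v1*w1) (v0*w1-v1*w0)
      hs hsp hB2pos hV2pos (by positivity)
      (by ring) (by ring) (by ring) (by ring) (by ring) (by ring)
      hQ hA1 hA2 hB1 hB2' hD
  · have hD' : s*(v0*w0+v1*w1) < -(-(v0*w1-v1*w0)) ∨
        s*(v0*w0+v1*w1) < -(v0*w1-v1*w0) := by
      rcases hD with h | h
      · exact Or.inr h
      · exact Or.inl (by linarith)
    have h := core_half s (a0^2+a1^2) (v0^2+v1^2) ((a0+v0)^2+(a1+v1)^2)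
      (a0*v0+a1*v1) (-(a0*v1-a1*v0))
      ((a0+v0)*w0+(a1+v1)*w1) (-((a0+v0)*w1-(a1+v1)*w0))
      (a0*w0+a1*w1) (-(a0*w1-a1*w0)) (v0*w0+v1*w1) (-(v0*w1-v1*w0))
      hs hsp hB2pos hV2pos (by positivity)
      (by ring) (by ring) (by ring) (by ring) (by ring) (by ring)
      (by linarith) (by linarith) (by linarith) (by linarith) (by linarith)
      hD'
    exact ⟨by linarith [h.2], by linarith [h.1]⟩

private lemma to_sform (s i c N : ℝ) (hs : s^2 = 3) (hsp : 0 < s)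
    (hN : 0 ≤ N) (hN2 : N^2 = i^2 + c^2) (h : N ≤ 2*i) :
    0 ≤ s*i - c ∧ 0 ≤ s*i + c := by
  have hi : 0 ≤ i := by nlinarith
  have h4 : c^2 ≤ (s*i)^2 := by rw [mul_pow, hs]; nlinarith
  have h5 : |c| ≤ |s*i| := by
    have := Real.sqrt_le_sqrt h4
    rwa [Real.sqrt_sq_eq_abs, Real.sqrt_sq_eq_abs] at this
  rw [abs_of_nonneg (mul_nonneg hsp.le hi)] at h5
  rcases abs_le.mp h5 with ⟨h6, h7⟩
  exact ⟨by linarith, by linarith⟩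

private lemma from_sform (s i c N : ℝ) (hs : s^2 = 3) (hsp : 0 < s)
    (hN : 0 ≤ N) (hN2 : N^2 = i^2 + c^2)
    (h1 : 0 ≤ s*i - c) (h2 : 0 ≤ s*i + c) : N ≤ 2*i := by
  have hi : 0 ≤ i := by nlinarith
  have hsq : N^2 ≤ (2*i)^2 := by nlinarith [mul_nonneg h1 h2]
  calc N = Real.sqrt (N^2) := (Real.sqrt_sq hN).symm
    _ ≤ Real.sqrt ((2*i)^2) := Real.sqrt_le_sqrt hsq
    _ = 2*i := Real.sqrt_sq (by linarith)

private lemma inner_coord (p q : EuclideanSpace ℝ (Fin 2)) :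
    (inner ℝ p q : ℝ) = p 0 * q 0 + p 1 * q 1 := by
  simp [PiLp.inner_apply, Fin.sum_univ_two, RCLike.inner_apply]; ring

private lemma norm_coord (p : EuclideanSpace ℝ (Fin 2)) :
    ‖p‖ = Real.sqrt ((p 0)^2 + (p 1)^2) := by
  rw [EuclideanSpace.norm_eq]; simp [Fin.sum_univ_two, Real.norm_eq_abs, sq_abs]

private lemma ang_gt (p q : EuclideanSpace ℝ (Fin 2)) (hp : p ≠ 0) (hq : q ≠ 0)
    (h : π/3 < InnerProductGeometry.angle p q) : 2*(inner ℝ p q : ℝ) < ‖p‖*‖q‖ := by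
  have hN : 0 < ‖p‖*‖q‖ :=
    mul_pos (norm_pos_iff.mpr hp) (norm_pos_iff.mpr hq)
  have h2 : Real.cos (InnerProductGeometry.angle p q) < Real.cos (π/3) :=
    Real.strictAntiOn_cos ⟨by linarith [Real.pi_pos], by linarith [Real.pi_pos]⟩
      ⟨InnerProductGeometry.angle_nonneg p q, InnerProductGeometry.angle_le_pi p q⟩ h
  rw [Real.cos_pi_div_three, InnerProductGeometry.cos_angle, div_lt_iff₀ hN] at h2
  linarith

private lemma ang_le (p q : EuclideanSpace ℝ (Fin 2)) (hp : p ≠ 0) (hq : q ≠ 0)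
    (h : InnerProductGeometry.angle p q ≤ π/3) : ‖p‖*‖q‖ ≤ 2*(inner ℝ p q : ℝ) := by
  have hN : 0 < ‖p‖*‖q‖ :=
    mul_pos (norm_pos_iff.mpr hp) (norm_pos_iff.mpr hq)
  have h2 : Real.cos (π/3) ≤ Real.cos (InnerProductGeometry.angle p q) :=
    Real.cos_le_cos_of_nonneg_of_le_pi (InnerProductGeometry.angle_nonneg p q)
      (by linarith [Real.pi_pos]) h
  rw [Real.cos_pi_div_three, InnerProductGeometry.cos_angle, le_div_iff₀ hN] at h2
  linarith

private lemma ang_of (p q : EuclideanSpace ℝ (Fin 2)) (hp : p ≠ 0) (hq : q ≠ 0)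
    (h : ‖p‖*‖q‖ ≤ 2*(inner ℝ p q : ℝ)) : InnerProductGeometry.angle p q ≤ π/3 := by
  by_contra hc
  push_neg at hc
  have := ang_gt p q hp hq hc
  linarith

set_option maxHeartbeats 1000000 in
theorem claim32 (u v x y : EuclideanSpace ℝ (Fin 2))
    (huv : u ≠ v) (hxy : x ≠ y)
    (hxv : x ≠ v) (hx : InnerProductGeometry.angle (x - v) (v - u) ≤ π / 3)
    (hy1 : InnerProductGeometry.angle (y - u) (u - v) > π / 3)
    (hy2 : InnerProductGeometry.angle (y - v) (v - u) > π / 3)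
    (hvy : v ≠ y) (hv : InnerProductGeometry.angle (v - y) (y - x) ≤ π / 3) :
    u ≠ y ∧ InnerProductGeometry.angle (u - y) (y - x) ≤ π / 3 := by
  have hyx : y - x ≠ 0 := sub_ne_zero.mpr (Ne.symm hxy)
  have hvy' : v - y ≠ 0 := sub_ne_zero.mpr hvy
  have hxv' : x - v ≠ 0 := sub_ne_zero.mpr hxv
  have hvu : v - u ≠ 0 := sub_ne_zero.mpr (Ne.symm huv)
  have hyv : y - v ≠ 0 := sub_ne_zero.mpr (Ne.symm hvy)
  have Hv := ang_le _ _ hvy' hyx hv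
  have Hx := ang_le _ _ hxv' hvu hx
  have Hy2 := ang_gt _ _ hyv hvu hy2
  have sub0 : ∀ p q : EuclideanSpace ℝ (Fin 2), (p - q) 0 = p 0 - q 0 := fun _ _ => rfl
  have sub1 : ∀ p q : EuclideanSpace ℝ (Fin 2), (p - q) 1 = p 1 - q 1 := fun _ _ => rfl
  simp only [inner_coord, norm_coord, sub0, sub1] at Hv Hx Hy2
  have hs : (Real.sqrt 3)^2 = 3 := Real.sq_sqrt (by norm_num)
  have hsp : 0 < Real.sqrt 3 := Real.sqrt_pos.mpr (by norm_num)
  set s := Real.sqrt 3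
  -- positivity of squared norms
  have pos_of_ne : ∀ p : EuclideanSpace ℝ (Fin 2), p ≠ 0 →
      0 < (p 0)^2 + (p 1)^2 := by
    intro p hp
    have h := norm_pos_iff.mpr hp
    rw [norm_coord] at h
    exact Real.sqrt_pos.mp h
  have hA2pos : 0 < (y 0 - x 0)^2 + (y 1 - x 1)^2 := by
    have := pos_of_ne _ hyx; simp only [sub0, sub1] at this; exact this
  have hV2pos : 0 < (v 0 - y 0)^2 + (v 1 - y 1)^2 := by
    have := pos_of_ne _ hvy'; simp only [sub0, sub1] at this; exact this
  have hXVpos : 0 < (x 0 - v 0)^2 + (x 1 - v 1)^2 := by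
    have := pos_of_ne _ hxv'; simp only [sub0, sub1] at this; exact this
  have hB2pos : 0 < ((y 0 - x 0)+(v 0 - y 0))^2 + ((y 1 - x 1)+(v 1 - y 1))^2 := by
    nlinarith [hXVpos]
  -- s-form of hv  (orientation: a = y-x first)
  have SV := to_sform s
      ((y 0 - x 0)*(v 0 - y 0) + (y 1 - x 1)*(v 1 - y 1))
      ((y 0 - x 0)*(v 1 - y 1) - (y 1 - x 1)*(v 0 - y 0))
      (Real.sqrt ((v 0 - y 0)^2 + (v 1 - y 1)^2) *
        Real.sqrt ((y 0 - x 0)^2 + (y 1 - x 1)^2))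
      hs hsp (by positivity)
      (by rw [mul_pow, Real.sq_sqrt (by positivity), Real.sq_sqrt (by positivity)]; ring)
      (by linarith [Hv])
  -- s-form of hx  (b = a + v', w = u - v), N as appears in Hx
  have SB := to_sform s
      (((y 0 - x 0)+(v 0 - y 0))*(u 0 - v 0) + ((y 1 - x 1)+(v 1 - y 1))*(u 1 - v 1))
      (((y 0 - x 0)+(v 0 - y 0))*(u 1 - v 1) - ((y 1 - x 1)+(v 1 - y 1))*(u 0 - v 0))
      (Real.sqrt ((x 0 - v 0)^2 + (x 1 - v 1)^2) *
        Real.sqrt ((v 0 - u 0)^2 + (v 1 - u 1)^2))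
      hs hsp (by positivity)
      (by rw [mul_pow, Real.sq_sqrt (by positivity), Real.sq_sqrt (by positivity)]; ring)
      (by linarith [Hx])
  -- strict D-disjunction from hy2
  have hD : s*((v 0 - y 0)*(u 0 - v 0)+(v 1 - y 1)*(u 1 - v 1)) <
        -((v 0 - y 0)*(u 1 - v 1)-(v 1 - y 1)*(u 0 - v 0)) ∨
      s*((v 0 - y 0)*(u 0 - v 0)+(v 1 - y 1)*(u 1 - v 1)) <
        ((v 0 - y 0)*(u 1 - v 1)-(v 1 - y 1)*(u 0 - v 0)) := by
    by_contra hcon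
    push_neg at hcon
    have hfrom := from_sform s
        ((v 0 - y 0)*(u 0 - v 0)+(v 1 - y 1)*(u 1 - v 1))
        ((v 0 - y 0)*(u 1 - v 1)-(v 1 - y 1)*(u 0 - v 0))
        (Real.sqrt ((y 0 - v 0)^2 + (y 1 - v 1)^2) *
          Real.sqrt ((v 0 - u 0)^2 + (v 1 - u 1)^2))
        hs hsp (by positivity)
        (by rw [mul_pow, Real.sq_sqrt (by positivity), Real.sq_sqrt (by positivity)]; ring)
        (by linarith [hcon.2]) (by linarith [hcon.1])
    linarith [Hy2, hfrom]
  -- core argument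
  have HC := core s (y 0 - x 0) (y 1 - x 1) (v 0 - y 0) (v 1 - y 1)
      (u 0 - v 0) (u 1 - v 1) hs hsp hB2pos hV2pos SV.1 SV.2 SB.1 SB.2 hD
  have hTnn : 0 ≤ (y 0 - x 0)*(u 0 - v 0)+(y 1 - x 1)*(u 1 - v 1) := by
    nlinarith [HC.1, HC.2, hsp]
  have hPpos : 0 < (y 0 - x 0)*(v 0 - y 0) + (y 1 - x 1)*(v 1 - y 1) := by
    have hNpos : 0 < Real.sqrt ((v 0 - y 0)^2 + (v 1 - y 1)^2) *
        Real.sqrt ((y 0 - x 0)^2 + (y 1 - x 1)^2) := by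
      apply mul_pos <;> rw [Real.sqrt_pos] <;> [exact hV2pos; exact hA2pos]
    nlinarith [Hv, hNpos]
  -- final quantities for pair (u - y, y - x)
  have hF1 : 0 ≤ s*((y 0 - x 0)*(u 0 - y 0) + (y 1 - x 1)*(u 1 - y 1)) -
      ((y 0 - x 0)*(u 1 - y 1) - (y 1 - x 1)*(u 0 - y 0)) := by
    linarith [SV.1, HC.1]
  have hF2 : 0 ≤ s*((y 0 - x 0)*(u 0 - y 0) + (y 1 - x 1)*(u 1 - y 1)) +
      ((y 0 - x 0)*(u 1 - y 1) - (y 1 - x 1)*(u 0 - y 0)) := by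
    linarith [SV.2, HC.2]
  have hFpos : 0 < (y 0 - x 0)*(u 0 - y 0) + (y 1 - x 1)*(u 1 - y 1) := by
    linarith [hPpos, hTnn]
  have huy : u ≠ y := by
    intro h
    subst h
    linarith [hFpos]
  refine ⟨huy, ?_⟩
  have hFN := from_sform s
      ((y 0 - x 0)*(u 0 - y 0) + (y 1 - x 1)*(u 1 - y 1))
      ((y 0 - x 0)*(u 1 - y 1) - (y 1 - x 1)*(u 0 - y 0))
      (Real.sqrt ((u 0 - y 0)^2 + (u 1 - y 1)^2) *
        Real.sqrt ((y 0 - x 0)^2 + (y 1 - x 1)^2))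
      hs hsp (by positivity)
      (by rw [mul_pow, Real.sq_sqrt (by positivity), Real.sq_sqrt (by positivity)]; ring)
      hF1 hF2
  apply ang_of _ _ (sub_ne_zero.mpr huy) hyx
  rw [inner_coord, norm_coord, norm_coord]
  simp only [sub0, sub1]
  linarith [hFN]
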